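/- Let φ = C_1 ∧ ⋯ ∧ C_m be a propositional formula in 3-CNF over the variables x_1,…,x_n, where each clause C_j is a disjunction of exactly three literals. Define the TBox T'_φ, all of whose concepts use only the Boolean operator ⊥ (the nullary constant false) besides atomic concepts, using atomic concepts t, d_0,…,d_n, x_1,…,x_n, x_1',…,x_n', C_1,…,C_m, C_1',…,C_m', f, f' and roles R_1,…,R_n, R_{x_1},…,R_{x_n}, R_{d_0},…,R_{d_n}, R_{C_1},…,R_{C_m}, F, and P_{1j}, P_{2j} for 1 ≤ j ≤ m. For a literal ℓ, let ℓ~ denote the atomic concept x_i' if ℓ = x_i and the atomic concept x_i if ℓ = ¬x_i. T'_φ consists of the axioms: (2) x_i ≡ ∃R_{x_i}.t and x_i' ≡ ∀R_{x_i}.⊥ for 1 ≤ i ≤ n; (3) d_i ⊑ ∃R_{i+1}.x_{i+1} and d_i ⊑ ∃R_{i+1}.x_{i+1}' for 0 ≤ i < n; (4) d_i ⊑ ∀R_{i+1}.d_{i+1} for 0 ≤ i < n, together with d_i ⊑ ∃R_{d_i}.t and d_j ⊑ ∀R_{d_i}.⊥ for all 0 ≤ i < j ≤ n; (5) x_i ⊑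 ∀R_j.x_i and x_i' ⊑ ∀R_j.x_i' for 1 ≤ i < j ≤ n; (6) for each clause C_j = ℓ_{1j} ∨ ℓ_{2j} ∨ ℓ_{3j}: ℓ~_{1j} ⊑ ∃P_{1j}.t, ℓ~_{2j} ⊑ ∀P_{1j}.ℓ~_{2j}, ∃P_{1j}.ℓ~_{2j} ⊑ ∃P_{2j}.t, ℓ~_{3j} ⊑ ∀P_{2j}.ℓ~_{3j}, and ∃P_{2j}.ℓ~_{3j} ⊑ C_j'; (7) C_j' ⊑ f for 1 ≤ j ≤ m; (8) f ⊑ ∃F.t and f' ⊑ ∀F.⊥; (9) C_j ≡ ∃R_{C_j}.t and C_j' ≡ ∀R_{C_j}.⊥ for 1 ≤ j ≤ m; (10) d_0 ⊑ ∀R_1.∀R_2.⋯∀R_n.f'. Then φ is a tautology (true under every assignment of the variables x_1,…,x_n) if and only if there exists an interpretation I satisfying T'_φ with d_0^I ≠ ∅. -/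

import Mathlib

/-- A Boolean operator: an arity `n` together with a Boolean function `Bool^n → Bool`. -/
abbrev BOp : Type := Σ n : ℕ, (Fin n → Bool) → Bool

/-- Concepts over the full signature: atomic concepts and roles are indexed by `ℕ`;
`app o cs` applies the Boolean operator `o` to `o.1` many argument concepts. -/
inductive DLConcept : Type where
  | atom : ℕ → DLConcept
  | app : (o : BOp) → (Fin o.1 → DLConcept) → DLConcept
  | ex : ℕ → DLConcept → DLConcept
  | all : ℕ → DLConcept → DLConcept

/-- An interpretation: a nonempty domain `Δ`, a subset of `Δ` for each atomic concept,
a binary relation for each role, and an element for each individual name. -/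
structure DLInterp (Δ : Type) where
  ne : Nonempty Δ
  atom : ℕ → Set Δ
  role : ℕ → Set (Δ × Δ)
  ind : ℕ → Δ

attribute [local instance] Classical.propDecidable

/-- Semantics of concepts. -/
noncomputable def DLConcept.sem {Δ : Type} (I : DLInterp Δ) : DLConcept → Set Δ
  | .atom A => I.atom A
  | .app o cs => {x | o.2 (fun i => decide (x ∈ DLConcept.sem I (cs i))) = true}
  | .ex R C => {x | ∃ y, (x, y) ∈ I.role R ∧ y ∈ DLConcept.sem I C}
  | .all R C => {x | ∀ y, (x, y) ∈ I.role R → y ∈ DLConcept.sem I C}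

/-- `C.over B` : the concept `C` uses only Boolean operators from `B`. -/
def DLConcept.over (B : Set BOp) : DLConcept → Prop
  | .atom _ => True
  | .app o cs => o ∈ B ∧ ∀ i, DLConcept.over B (cs i)
  | .ex _ C => DLConcept.over B C
  | .all _ C => DLConcept.over B C

/-- Satisfaction of a GCI `C ⊑ D`. -/
def satGCI {Δ : Type} (I : DLInterp Δ) (C D : DLConcept) : Prop := C.sem I ⊆ D.sem I

/-- A TBox is a finite list of GCIs; satisfaction of a TBox. -/
def satTBox {Δ : Type} (I : DLInterp Δ) (T : List (DLConcept × DLConcept)) : Prop :=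
  ∀ p ∈ T, satGCI I p.1 p.2

/-- TBox satisfiability. -/
def TBoxSat (T : List (DLConcept × DLConcept)) : Prop :=
  ∃ (Δ : Type) (I : DLInterp Δ), satTBox I T

/-- The nullary operator `⊤` (constant true) and the concept it denotes. -/
def topOp : BOp := ⟨0, fun _ => true⟩
def ctop : DLConcept := .app topOp (fun i => i.elim0)

/-- The nullary operator `⊥` (constant false) and the concept it denotes. -/
def botOp : BOp := ⟨0, fun _ => false⟩
def cbot : DLConcept := .app botOp (fun i => i.elim0)

/-- The unary negation operator and negated concepts. -/
def negOp : BOp := ⟨1, fun v => !(v 0)⟩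
def cneg (C : DLConcept) : DLConcept := .app negOp (fun _ => C)

/-! ### 3-CNF formulas

Variables are `x_0, …, x_{n-1}` (zero-based; the paper's `x_{i+1}` is our `x_i`).
A literal is a pair `(v, sign)` with `sign = true` for the positive literal. -/

/-- Evaluation of a literal under an assignment `σ : ℕ → Bool`. -/
def litEval {n : ℕ} (σ : ℕ → Bool) (l : Fin n × Bool) : Bool :=
  if l.2 then σ l.1.val else !(σ l.1.val)

/-- Evaluation of the 3-CNF formula `φ = C_1 ∧ ⋯ ∧ C_m` under an assignment. -/
def matrixEval {n m : ℕ}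
    (Cl : Fin m → (Fin n × Bool) × (Fin n × Bool) × (Fin n × Bool))
    (σ : ℕ → Bool) : Prop :=
  ∀ j : Fin m,
    (litEval σ (Cl j).1 || litEval σ (Cl j).2.1 || litEval σ (Cl j).2.2) = true

/-! ### Names of the atomic concepts and roles used by `T'_φ`
(pairwise distinct by the choice of residues). -/

def dA (i : ℕ) : ℕ := 8 * i       -- level concepts d_0, …, d_n
def xpA (i : ℕ) : ℕ := 8 * i + 1  -- variable concepts x_{i+1}
def xmA (i : ℕ) : ℕ := 8 * i + 2  -- complementary variable concepts x_{i+1}'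
def cpA (j : ℕ) : ℕ := 8 * j + 3  -- clause concepts C_{j+1}
def cmA (j : ℕ) : ℕ := 8 * j + 4  -- complementary clause concepts C_{j+1}'
def fA : ℕ := 5                   -- concept f
def fA' : ℕ := 6                  -- concept f'
def tA : ℕ := 7                   -- concept t (replacing ⊤)

def rF : ℕ := 7                   -- role F
def rR (i : ℕ) : ℕ := 8 * i       -- roles R_{i+1}
def rX (i : ℕ) : ℕ := 8 * i + 1   -- roles R_{x_{i+1}}
def rD (i : ℕ) : ℕ := 8 * i + 2   -- roles R_{d_i}
def rC (j : ℕ) : ℕ := 8 * j + 3   -- roles R_{C_{j+1}}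
def rP1 (j : ℕ) : ℕ := 8 * j + 4  -- roles P_{1,j+1}
def rP2 (j : ℕ) : ℕ := 8 * j + 5  -- roles P_{2,j+1}

/-- `ℓ~`: the atomic concept `x_i'` if `ℓ = x_i`, and `x_i` if `ℓ = ¬x_i`. -/
def til {n : ℕ} (l : Fin n × Bool) : DLConcept :=
  if l.2 then .atom (xmA l.1.val) else .atom (xpA l.1.val)

/-- The atomic concept `t`. -/
def ct : DLConcept := .atom tA

/-- `C ≡ D` as the two GCIs `C ⊑ D` and `D ⊑ C`. -/
def eqAx (C D : DLConcept) : List (DLConcept × DLConcept) := [(C, D), (D, C)]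

/-- `∀R_1.∀R_2.⋯∀R_n.base`. -/
def allChain : List ℕ → DLConcept → DLConcept
  | [], base => base
  | r :: rest, base => .all r (allChain rest base)

/-- The TBox `T'_φ` of STATEMENT 16, for the 3-CNF formula `φ = C_1 ∧ ⋯ ∧ C_m`;
its concepts use only the Boolean operator `⊥` besides atomic concepts. -/
def Tphi' (n m : ℕ)
    (Cl : Fin m → (Fin n × Bool) × (Fin n × Bool) × (Fin n × Bool)) :
    List (DLConcept × DLConcept) :=
  -- (2) x_i ≡ ∃R_{x_i}.t and x_i' ≡ ∀R_{x_i}.⊥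
  (List.ofFn fun i : Fin n =>
        eqAx (.atom (xpA i.val)) (.ex (rX i.val) ct) ++
        eqAx (.atom (xmA i.val)) (.all (rX i.val) cbot)).flatten
  -- (3) d_i ⊑ ∃R_{i+1}.x_{i+1} and d_i ⊑ ∃R_{i+1}.x_{i+1}'
  ++ (List.ofFn fun i : Fin n =>
        [(DLConcept.atom (dA i.val), DLConcept.ex (rR i.val) (.atom (xpA i.val))),
         (DLConcept.atom (dA i.val), DLConcept.ex (rR i.val) (.atom (xmA i.val)))]).flatten
  -- (4) d_i ⊑ ∀R_{i+1}.d_{i+1}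
  ++ (List.ofFn fun i : Fin n =>
        (DLConcept.atom (dA i.val), DLConcept.all (rR i.val) (.atom (dA (i.val + 1)))))
  -- (4) d_i ⊑ ∃R_{d_i}.t and d_j ⊑ ∀R_{d_i}.⊥ for 0 ≤ i < j ≤ n
  ++ ((List.range (n + 1)).flatMap fun i => (List.range (n + 1)).flatMap fun j =>
        if i < j then
          [(DLConcept.atom (dA i), DLConcept.ex (rD i) ct),
           (DLConcept.atom (dA j), DLConcept.all (rD i) cbot)]
        else [])
  -- (5) x_i ⊑ ∀R_j.x_i and x_i' ⊑ ∀R_j.x_i' for 1 ≤ i < j ≤ n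
  ++ ((List.range n).flatMap fun i => (List.range n).flatMap fun j =>
        if i < j then
          [(DLConcept.atom (xpA i), DLConcept.all (rR j) (.atom (xpA i))),
           (DLConcept.atom (xmA i), DLConcept.all (rR j) (.atom (xmA i)))]
        else [])
  -- (6) clause axioms for C_j = ℓ_{1j} ∨ ℓ_{2j} ∨ ℓ_{3j}
  ++ (List.ofFn fun j : Fin m =>
        [(til (Cl j).1, DLConcept.ex (rP1 j.val) ct),
         (til (Cl j).2.1, DLConcept.all (rP1 j.val) (til (Cl j).2.1)),
         (DLConcept.ex (rP1 j.val) (til (Cl j).2.1), DLConcept.ex (rP2 j.val) ct),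
         (til (Cl j).2.2, DLConcept.all (rP2 j.val) (til (Cl j).2.2)),
         (DLConcept.ex (rP2 j.val) (til (Cl j).2.2), DLConcept.atom (cmA j.val))]).flatten
  -- (7) C_j' ⊑ f
  ++ (List.ofFn fun j : Fin m => (DLConcept.atom (cmA j.val), DLConcept.atom fA))
  -- (8) f ⊑ ∃F.t and f' ⊑ ∀F.⊥
  ++ [(DLConcept.atom fA, DLConcept.ex rF ct),
      (DLConcept.atom fA', DLConcept.all rF cbot)]
  -- (9) C_j ≡ ∃R_{C_j}.t and C_j' ≡ ∀R_{C_j}.⊥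
  ++ (List.ofFn fun j : Fin m =>
        eqAx (.atom (cpA j.val)) (.ex (rC j.val) ct) ++
        eqAx (.atom (cmA j.val)) (.all (rC j.val) cbot)).flatten
  -- (10) d_0 ⊑ ∀R_1.∀R_2.⋯∀R_n.f'
  ++ [(DLConcept.atom (dA 0),
       allChain (List.ofFn fun i : Fin n => rR i.val) (.atom fA'))]

/-! ### Auxiliary development -/

lemma cbot_sem {Δ : Type} (I : DLInterp Δ) : cbot.sem I = ∅ := by
  ext x; simp [cbot, DLConcept.sem, botOp]

lemma ofFn_val_map {α : Type} (f : ℕ → α) :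
    ∀ (k s : ℕ), (List.ofFn fun i : Fin k => f (s + i.val)) = (List.range' s k).map f
  | 0, _ => by simp
  | k+1, s => by
    rw [List.range'_succ, List.ofFn_succ, List.map_cons, ← ofFn_val_map f k (s+1)]
    have he : (fun i : Fin k => f (s + (i.succ : Fin (k+1)).val)) = fun i : Fin k => f (s + 1 + i.val) := by
      funext i; congr 1; simp [Fin.val_succ]; omega
    rw [he]
    simp

lemma ofFn_val_map' {α : Type} (f : ℕ → α) (k : ℕ) :
    (List.ofFn fun i : Fin k => f i.val) = (List.range' 0 k).map f := by
  rw [← ofFn_val_map f k 0]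
  simp

lemma satTBox_append {Δ : Type} (I : DLInterp Δ) (A B : List (DLConcept × DLConcept)) :
    satTBox I (A ++ B) ↔ satTBox I A ∧ satTBox I B := by
  simp [satTBox, List.mem_append, or_imp, forall_and]
/-! ### The canonical model for the forward direction -/

section Model

variable (n m : ℕ) (Cl : Fin m → (Fin n × Bool) × (Fin n × Bool) × (Fin n × Bool))

/-- Domain: a level in `{0,…,n}` together with an assignment. -/
abbrev ΔT := Fin (n + 1) × (ℕ → Bool)

/-- Semantic counterpart of `til l`. -/
def satTil (l : Fin n × Bool) (x : ΔT n) : Prop :=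
  match l.2 with
  | true => ¬(l.1.val < x.1.val ∧ x.2 l.1.val = true)
  | false => (l.1.val < x.1.val ∧ x.2 l.1.val = true)

def triSet (j : Fin m) : Set (ΔT n) :=
  {x | satTil n (Cl j).1 x ∧ satTil n (Cl j).2.1 x ∧ satTil n (Cl j).2.2 x}

def fSet : Set (ΔT n) := {x | ∃ j, x ∈ triSet n m Cl j}

def cpSet (j : ℕ) : Set (ΔT n) := if h : j < m then (triSet n m Cl ⟨j, h⟩)ᶜ else Set.univ

def myAtom (a : ℕ) : Set (ΔT n) :=
  if a % 8 = 0 then {x | x.1.val = a / 8}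
  else if a % 8 = 1 then {x | a / 8 < x.1.val ∧ x.2 (a / 8) = true}
  else if a % 8 = 2 then {x | ¬(a / 8 < x.1.val ∧ x.2 (a / 8) = true)}
  else if a % 8 = 3 then cpSet n m Cl (a / 8)
  else if a % 8 = 4 then (cpSet n m Cl (a / 8))ᶜ
  else if a = 5 then fSet n m Cl
  else if a = 6 then {x | x.1.val = n}
  else Set.univ

def myRole (r : ℕ) : Set (ΔT n × ΔT n) :=
  if r % 8 = 0 then
    {p | p.1.1.val = r / 8 ∧ p.2.1.val = r / 8 + 1 ∧ ∀ k < r / 8, p.1.2 k = p.2.2 k}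
  else if r % 8 = 1 then {p | r / 8 < p.1.1.val ∧ p.1.2 (r / 8) = true}
  else if r % 8 = 2 then {p | p.1.1.val = r / 8}
  else if r % 8 = 3 then {p | p.1 ∈ cpSet n m Cl (r / 8)}
  else if r % 8 = 4 then
    {p | if h : r / 8 < m then p.2 = p.1 ∧ satTil n (Cl ⟨r / 8, h⟩).1 p.1 else False}
  else if r % 8 = 5 then
    {p | if h : r / 8 < m then
        p.2 = p.1 ∧ satTil n (Cl ⟨r / 8, h⟩).1 p.1 ∧ satTil n (Cl ⟨r / 8, h⟩).2.1 p.1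
      else False}
  else {p | p.1 ∈ fSet n m Cl}

noncomputable def myI : DLInterp (ΔT n) where
  ne := ⟨(0, fun _ => false)⟩
  atom := myAtom n m Cl
  role := myRole n m Cl
  ind := fun _ => (0, fun _ => false)

@[simp] lemma myI_atom (a : ℕ) : (myI n m Cl).atom a = myAtom n m Cl a := rfl

@[simp] lemma myI_role (r : ℕ) : (myI n m Cl).role r = myRole n m Cl r := rfl

@[simp] lemma sem_atom (a : ℕ) :
    (DLConcept.atom a).sem (myI n m Cl) = myAtom n m Cl a := rfl

@[simp] lemma myAtom_dA (i : ℕ) : myAtom n m Cl (dA i) = {x | x.1.val = i} := by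
  have h0 : dA i % 8 = 0 := by unfold dA; omega
  have h1 : dA i / 8 = i := by unfold dA; omega
  simp [myAtom, h0, h1]

@[simp] lemma myAtom_xpA (i : ℕ) :
    myAtom n m Cl (xpA i) = {x | i < x.1.val ∧ x.2 i = true} := by
  have h0 : xpA i % 8 = 1 := by unfold xpA; omega
  have h0' : ¬ (xpA i % 8 = 0) := by omega
  have h1 : xpA i / 8 = i := by unfold xpA; omega
  simp [myAtom, h0, h0', h1]

@[simp] lemma myAtom_xmA (i : ℕ) :
    myAtom n m Cl (xmA i) = {x | ¬(i < x.1.val ∧ x.2 i = true)} := by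
  have h0 : xmA i % 8 = 2 := by unfold xmA; omega
  have ha : ¬ (xmA i % 8 = 0) := by omega
  have hb : ¬ (xmA i % 8 = 1) := by omega
  have h1 : xmA i / 8 = i := by unfold xmA; omega
  simp [myAtom, h0, ha, hb, h1]

@[simp] lemma myAtom_cpA (j : ℕ) : myAtom n m Cl (cpA j) = cpSet n m Cl j := by
  have h0 : cpA j % 8 = 3 := by unfold cpA; omega
  have ha : ¬ (cpA j % 8 = 0) := by omega
  have hb : ¬ (cpA j % 8 = 1) := by omega
  have hc : ¬ (cpA j % 8 = 2) := by omega
  have h1 : cpA j / 8 = j := by unfold cpA; omega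
  simp [myAtom, h0, ha, hb, hc, h1]

@[simp] lemma myAtom_cmA (j : ℕ) : myAtom n m Cl (cmA j) = (cpSet n m Cl j)ᶜ := by
  have h0 : cmA j % 8 = 4 := by unfold cmA; omega
  have ha : ¬ (cmA j % 8 = 0) := by omega
  have hb : ¬ (cmA j % 8 = 1) := by omega
  have hc : ¬ (cmA j % 8 = 2) := by omega
  have hd : ¬ (cmA j % 8 = 3) := by omega
  have h1 : cmA j / 8 = j := by unfold cmA; omega
  simp [myAtom, h0, ha, hb, hc, hd, h1]

@[simp] lemma myAtom_fA : myAtom n m Cl fA = fSet n m Cl := by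
  simp [myAtom, fA]

@[simp] lemma myAtom_fA' : myAtom n m Cl fA' = {x | x.1.val = n} := by
  simp [myAtom, fA']

@[simp] lemma myAtom_tA : myAtom n m Cl tA = Set.univ := by
  simp [myAtom, tA]

@[simp] lemma ct_sem : ct.sem (myI n m Cl) = Set.univ := by
  simp [ct, DLConcept.sem]

@[simp] lemma myRole_rR (i : ℕ) :
    myRole n m Cl (rR i) =
      {p | p.1.1.val = i ∧ p.2.1.val = i + 1 ∧ ∀ k < i, p.1.2 k = p.2.2 k} := by
  have h0 : rR i % 8 = 0 := by unfold rR; omega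
  have h1 : rR i / 8 = i := by unfold rR; omega
  simp [myRole, h0, h1]

@[simp] lemma myRole_rX (i : ℕ) :
    myRole n m Cl (rX i) = {p | i < p.1.1.val ∧ p.1.2 i = true} := by
  have h0 : rX i % 8 = 1 := by unfold rX; omega
  have ha : ¬ (rX i % 8 = 0) := by omega
  have h1 : rX i / 8 = i := by unfold rX; omega
  simp [myRole, h0, ha, h1]

@[simp] lemma myRole_rD (i : ℕ) :
    myRole n m Cl (rD i) = {p | p.1.1.val = i} := by
  have h0 : rD i % 8 = 2 := by unfold rD; omega
  have ha : ¬ (rD i % 8 = 0) := by omega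
  have hb : ¬ (rD i % 8 = 1) := by omega
  have h1 : rD i / 8 = i := by unfold rD; omega
  simp [myRole, h0, ha, hb, h1]

@[simp] lemma myRole_rC (j : ℕ) :
    myRole n m Cl (rC j) = {p | p.1 ∈ cpSet n m Cl j} := by
  have h0 : rC j % 8 = 3 := by unfold rC; omega
  have ha : ¬ (rC j % 8 = 0) := by omega
  have hb : ¬ (rC j % 8 = 1) := by omega
  have hc : ¬ (rC j % 8 = 2) := by omega
  have h1 : rC j / 8 = j := by unfold rC; omega
  simp [myRole, h0, ha, hb, hc, h1]

@[simp] lemma myRole_rP1 (j : Fin m) :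
    myRole n m Cl (rP1 j.val) = {p | p.2 = p.1 ∧ satTil n (Cl j).1 p.1} := by
  have h0 : rP1 j.val % 8 = 4 := by unfold rP1; omega
  have ha : ¬ (rP1 j.val % 8 = 0) := by omega
  have hb : ¬ (rP1 j.val % 8 = 1) := by omega
  have hc : ¬ (rP1 j.val % 8 = 2) := by omega
  have hd : ¬ (rP1 j.val % 8 = 3) := by omega
  have h1 : rP1 j.val / 8 = j.val := by unfold rP1; omega
  simp only [myRole, h0, ha, hb, hc, hd, h1, if_true, if_false, if_neg, if_pos]
  ext p
  simp [dif_pos j.isLt]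

@[simp] lemma myRole_rP2 (j : Fin m) :
    myRole n m Cl (rP2 j.val) =
      {p | p.2 = p.1 ∧ satTil n (Cl j).1 p.1 ∧ satTil n (Cl j).2.1 p.1} := by
  have h0 : rP2 j.val % 8 = 5 := by unfold rP2; omega
  have ha : ¬ (rP2 j.val % 8 = 0) := by omega
  have hb : ¬ (rP2 j.val % 8 = 1) := by omega
  have hc : ¬ (rP2 j.val % 8 = 2) := by omega
  have hd : ¬ (rP2 j.val % 8 = 3) := by omega
  have he : ¬ (rP2 j.val % 8 = 4) := by omega
  have h1 : rP2 j.val / 8 = j.val := by unfold rP2; omega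
  simp only [myRole, h0, ha, hb, hc, hd, he, h1, if_true, if_false, if_neg, if_pos]
  ext p
  simp [dif_pos j.isLt]

@[simp] lemma myRole_rF : myRole n m Cl rF = {p | p.1 ∈ fSet n m Cl} := by
  simp [myRole, rF]

lemma til_sem (l : Fin n × Bool) :
    (til l).sem (myI n m Cl) = {x | satTil n l x} := by
  rcases l with ⟨v, b⟩
  ext x
  cases b <;> simp [til, satTil, DLConcept.sem]

end Model
section ModelSat

variable (n m : ℕ) (Cl : Fin m → (Fin n × Bool) × (Fin n × Bool) × (Fin n × Bool))

lemma satTil_level_n (l : Fin n × Bool) (x : ΔT n) (hx : x.1.val = n)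
    (h : satTil n l x) : litEval x.2 l = false := by
  rcases l with ⟨v, b⟩
  cases b
  · have h' : v.val < x.1.val ∧ x.2 v.val = true := h
    simp [litEval, h'.2]
  · have h' : ¬(v.val < x.1.val ∧ x.2 v.val = true) := h
    have hv : x.2 v.val = false := by
      by_contra hc
      exact h' ⟨by omega, by simpa using hc⟩
    simp [litEval, hv]

lemma level_n_not_fSet (taut : ∀ σ : ℕ → Bool, matrixEval Cl σ)
    (x : ΔT n) (hx : x.1.val = n) : x ∉ fSet n m Cl := by
  rintro ⟨j, h1, h2, h3⟩
  have ht := taut x.2 j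
  rw [satTil_level_n n (Cl j).1 x hx h1, satTil_level_n n (Cl j).2.1 x hx h2,
      satTil_level_n n (Cl j).2.2 x hx h3] at ht
  simp at ht

lemma chain_sat : ∀ (k i : ℕ), i + k = n → ∀ x : ΔT n, x.1.val = i →
    x ∈ (allChain ((List.range' i k).map rR) (DLConcept.atom fA')).sem (myI n m Cl)
  | 0, i, h => by
    intro x hx
    simp only [List.range'_zero, List.map_nil, allChain]
    simp only [allChain, DLConcept.sem, sem_atom, myI_atom, myAtom_fA', Set.mem_setOf_eq]
    omega
  | k+1, i, h => by
    intro x hx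
    rw [List.range'_succ, List.map_cons]
    simp only [allChain, DLConcept.sem, Set.mem_setOf_eq]
    intro y hxy
    simp only [myI_role, myRole_rR, Set.mem_setOf_eq] at hxy
    exact chain_sat k (i+1) (by omega) y (by omega)

end ModelSat
lemma mem_sem_atom {Δ : Type} (I : DLInterp Δ) (a : ℕ) (x : Δ) :
    x ∈ (DLConcept.atom a).sem I ↔ x ∈ I.atom a := Iff.rfl

lemma mem_sem_ex {Δ : Type} (I : DLInterp Δ) (r : ℕ) (C : DLConcept) (x : Δ) :
    x ∈ (DLConcept.ex r C).sem I ↔ ∃ y, (x, y) ∈ I.role r ∧ y ∈ C.sem I := Iff.rfl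

lemma mem_sem_all {Δ : Type} (I : DLInterp Δ) (r : ℕ) (C : DLConcept) (x : Δ) :
    x ∈ (DLConcept.all r C).sem I ↔ ∀ y, (x, y) ∈ I.role r → y ∈ C.sem I := Iff.rfl

section BigSat

variable (n m : ℕ) (Cl : Fin m → (Fin n × Bool) × (Fin n × Bool) × (Fin n × Bool))

theorem model_sat (taut : ∀ σ : ℕ → Bool, matrixEval Cl σ) :
    satTBox (myI n m Cl) (Tphi' n m Cl) := by
  rw [Tphi']
  rw [satTBox_append, satTBox_append, satTBox_append, satTBox_append, satTBox_append,
      satTBox_append, satTBox_append, satTBox_append, satTBox_append]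
  refine ⟨⟨⟨⟨⟨⟨⟨⟨⟨?_, ?_⟩, ?_⟩, ?_⟩, ?_⟩, ?_⟩, ?_⟩, ?_⟩, ?_⟩, ?_⟩
  -- (2)
  · intro p hp
    rw [List.mem_flatten] at hp
    obtain ⟨l, hl, hpl⟩ := hp
    rw [List.mem_ofFn] at hl
    obtain ⟨i, rfl⟩ := hl
    simp only [eqAx, List.cons_append, List.nil_append, List.mem_cons,
      List.not_mem_nil, or_false] at hpl
    rcases hpl with h | h | h | h <;> subst h
    · intro x hx
      rw [mem_sem_atom, myI_atom, myAtom_xpA] at hx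
      rw [mem_sem_ex]
      exact ⟨x, by rw [myI_role, myRole_rX]; exact hx, by rw [ct_sem]; trivial⟩
    · rintro x ⟨y, hxy, -⟩
      rw [mem_sem_atom, myI_atom, myAtom_xpA]
      rw [myI_role, myRole_rX] at hxy
      exact hxy
    · intro x hx
      rw [mem_sem_atom, myI_atom, myAtom_xmA] at hx
      rw [mem_sem_all]
      intro y hxy
      rw [myI_role, myRole_rX] at hxy
      exact absurd hxy hx
    · intro x hx
      rw [mem_sem_all] at hx
      rw [mem_sem_atom, myI_atom, myAtom_xmA]
      intro hc
      have h1 : (x, x) ∈ (myI n m Cl).role (rX i.val) := by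
        rw [myI_role, myRole_rX]; exact hc
      have h2 := hx x h1
      rw [cbot_sem] at h2
      exact h2
  -- (3)
  · intro p hp
    rw [List.mem_flatten] at hp
    obtain ⟨l, hl, hpl⟩ := hp
    rw [List.mem_ofFn] at hl
    obtain ⟨i, rfl⟩ := hl
    have hi := i.isLt
    simp only [List.mem_cons, List.not_mem_nil, or_false] at hpl
    rcases hpl with h | h <;> subst h <;> intro x hx <;>
      rw [mem_sem_atom, myI_atom, myAtom_dA] at hx <;> rw [mem_sem_ex]
    · refine ⟨(⟨i.val + 1, by omega⟩, Function.update x.2 i.val true), ?_, ?_⟩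
      · rw [myI_role, myRole_rR]
        exact ⟨hx, rfl, fun k hk => (Function.update_of_ne (by omega) _ _).symm⟩
      · rw [mem_sem_atom, myI_atom, myAtom_xpA]
        exact ⟨by simp, by simp⟩
    · refine ⟨(⟨i.val + 1, by omega⟩, Function.update x.2 i.val false), ?_, ?_⟩
      · rw [myI_role, myRole_rR]
        exact ⟨hx, rfl, fun k hk => (Function.update_of_ne (by omega) _ _).symm⟩
      · rw [mem_sem_atom, myI_atom, myAtom_xmA]
        simp
  -- (4a)
  · intro p hp
    rw [List.mem_ofFn] at hp
    obtain ⟨i, rfl⟩ := hp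
    intro x hx
    rw [mem_sem_all]
    intro y hxy
    rw [myI_role, myRole_rR] at hxy
    rw [mem_sem_atom, myI_atom, myAtom_dA]
    exact hxy.2.1
  -- (4b)
  · intro p hp
    simp only [List.mem_flatMap, List.mem_range] at hp
    obtain ⟨i, hi, j, hj, hp⟩ := hp
    by_cases hij : i < j
    · rw [if_pos hij] at hp
      simp only [List.mem_cons, List.not_mem_nil, or_false] at hp
      rcases hp with h | h <;> subst h <;> intro x hx <;>
        rw [mem_sem_atom, myI_atom, myAtom_dA] at hx
      · rw [mem_sem_ex]
        exact ⟨x, by rw [myI_role, myRole_rD]; exact hx, by rw [ct_sem]; trivial⟩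
      · rw [mem_sem_all]
        intro y hxy
        rw [myI_role, myRole_rD] at hxy
        have hx' : x.1.val = j := hx
        have hxy' : x.1.val = i := hxy
        omega
    · rw [if_neg hij] at hp
      simp at hp
  -- (5)
  · intro p hp
    simp only [List.mem_flatMap, List.mem_range] at hp
    obtain ⟨i, hi, j, hj, hp⟩ := hp
    by_cases hij : i < j
    · rw [if_pos hij] at hp
      simp only [List.mem_cons, List.not_mem_nil, or_false] at hp
      rcases hp with h | h <;> subst h <;> intro x hx <;> rw [mem_sem_all] <;>
        intro y hxy <;> rw [myI_role, myRole_rR] at hxy <;>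
        obtain ⟨e1, e2, e3⟩ := hxy
      · have e1' : x.1.val = j := e1
        have e2' : y.1.val = j + 1 := e2
        have e3' : ∀ k < j, x.2 k = y.2 k := e3
        rw [mem_sem_atom, myI_atom, myAtom_xpA] at hx ⊢
        obtain ⟨h1, h2⟩ := hx
        refine ⟨by omega, ?_⟩
        rw [← e3' i hij]
        exact h2
      · have e1' : x.1.val = j := e1
        have e2' : y.1.val = j + 1 := e2
        have e3' : ∀ k < j, x.2 k = y.2 k := e3
        rw [mem_sem_atom, myI_atom, myAtom_xmA] at hx ⊢
        intro hc
        have hc2 : y.2 i = true := hc.2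
        exact hx ⟨by omega, by rw [e3' i hij]; exact hc2⟩
    · rw [if_neg hij] at hp
      simp at hp
  -- (6)
  · intro p hp
    rw [List.mem_flatten] at hp
    obtain ⟨l, hl, hpl⟩ := hp
    rw [List.mem_ofFn] at hl
    obtain ⟨j, rfl⟩ := hl
    simp only [List.mem_cons, List.not_mem_nil, or_false] at hpl
    rcases hpl with h | h | h | h | h <;> subst h
    · intro x hx
      rw [til_sem] at hx
      rw [mem_sem_ex]
      exact ⟨x, by rw [myI_role, myRole_rP1]; exact ⟨rfl, hx⟩, by rw [ct_sem]; trivial⟩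
    · intro x hx
      rw [mem_sem_all]
      intro y hxy
      rw [myI_role, myRole_rP1] at hxy
      have h1 : y = x := hxy.1
      rw [h1]
      exact hx
    · intro x hx
      rw [mem_sem_ex] at hx ⊢
      obtain ⟨y, hxy, hy⟩ := hx
      rw [myI_role, myRole_rP1] at hxy
      rw [til_sem] at hy
      refine ⟨x, ?_, by rw [ct_sem]; trivial⟩
      rw [myI_role, myRole_rP2]
      have h1 : y = x := hxy.1
      exact ⟨rfl, hxy.2, h1 ▸ hy⟩
    · intro x hx
      rw [mem_sem_all]
      intro y hxy
      rw [myI_role, myRole_rP2] at hxy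
      have h1 : y = x := hxy.1
      rw [h1]
      exact hx
    · intro x hx
      rw [mem_sem_ex] at hx
      obtain ⟨y, hxy, hy⟩ := hx
      rw [myI_role, myRole_rP2] at hxy
      rw [til_sem] at hy
      rw [mem_sem_atom, myI_atom, myAtom_cmA]
      simp only [cpSet, dif_pos j.isLt, compl_compl, Fin.eta]
      have h1 : y = x := hxy.1
      exact ⟨hxy.2.1, hxy.2.2, h1 ▸ hy⟩
  -- (7)
  · intro p hp
    rw [List.mem_ofFn] at hp
    obtain ⟨j, rfl⟩ := hp
    intro x hx
    rw [mem_sem_atom, myI_atom, myAtom_cmA] at hx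
    simp only [cpSet, dif_pos j.isLt, compl_compl, Fin.eta] at hx
    rw [mem_sem_atom, myI_atom, myAtom_fA]
    exact ⟨j, hx⟩
  -- (8)
  · intro p hp
    simp only [List.mem_cons, List.not_mem_nil, or_false] at hp
    rcases hp with h | h <;> subst h
    · intro x hx
      rw [mem_sem_atom, myI_atom, myAtom_fA] at hx
      rw [mem_sem_ex]
      exact ⟨x, by rw [myI_role, myRole_rF]; exact hx, by rw [ct_sem]; trivial⟩
    · intro x hx
      rw [mem_sem_atom, myI_atom, myAtom_fA'] at hx
      rw [mem_sem_all]
      intro y hxy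
      rw [myI_role, myRole_rF] at hxy
      exact absurd hxy (level_n_not_fSet n m Cl taut x hx)
  -- (9)
  · intro p hp
    rw [List.mem_flatten] at hp
    obtain ⟨l, hl, hpl⟩ := hp
    rw [List.mem_ofFn] at hl
    obtain ⟨j, rfl⟩ := hl
    simp only [eqAx, List.cons_append, List.nil_append, List.mem_cons,
      List.not_mem_nil, or_false] at hpl
    rcases hpl with h | h | h | h <;> subst h
    · intro x hx
      rw [mem_sem_atom, myI_atom, myAtom_cpA] at hx
      rw [mem_sem_ex]
      exact ⟨x, by rw [myI_role, myRole_rC]; exact hx, by rw [ct_sem]; trivial⟩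
    · rintro x ⟨y, hxy, -⟩
      rw [mem_sem_atom, myI_atom, myAtom_cpA]
      rw [myI_role, myRole_rC] at hxy
      exact hxy
    · intro x hx
      rw [mem_sem_atom, myI_atom, myAtom_cmA] at hx
      rw [mem_sem_all]
      intro y hxy
      rw [myI_role, myRole_rC] at hxy
      exact absurd hxy hx
    · intro x hx
      rw [mem_sem_all] at hx
      rw [mem_sem_atom, myI_atom, myAtom_cmA]
      intro hc
      have h1 : (x, x) ∈ (myI n m Cl).role (rC j.val) := by
        rw [myI_role, myRole_rC]; exact hc
      have h2 := hx x h1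
      rw [cbot_sem] at h2
      exact h2
  -- (10)
  · intro p hp
    simp only [List.mem_cons, List.not_mem_nil, or_false] at hp
    subst hp
    intro x hx
    rw [mem_sem_atom, myI_atom, myAtom_dA] at hx
    rw [ofFn_val_map' rR n]
    exact chain_sat n m Cl n 0 (by omega) x hx

end BigSat
section MemLemmas

variable (n m : ℕ) (Cl : Fin m → (Fin n × Bool) × (Fin n × Bool) × (Fin n × Bool))

lemma mem3p (i : Fin n) :
    (DLConcept.atom (dA i.val), DLConcept.ex (rR i.val) (.atom (xpA i.val))) ∈ Tphi' n m Cl := by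
  rw [Tphi']
  apply List.mem_append_left; apply List.mem_append_left; apply List.mem_append_left
  apply List.mem_append_left; apply List.mem_append_left; apply List.mem_append_left
  apply List.mem_append_left; apply List.mem_append_left
  apply List.mem_append_right
  refine List.mem_flatten.2 ⟨_, List.mem_ofFn.2 ⟨i, rfl⟩, ?_⟩
  simp

lemma mem3m (i : Fin n) :
    (DLConcept.atom (dA i.val), DLConcept.ex (rR i.val) (.atom (xmA i.val))) ∈ Tphi' n m Cl := by
  rw [Tphi']
  apply List.mem_append_left; apply List.mem_append_left; apply List.mem_append_left
  apply List.mem_append_left; apply List.mem_append_left; apply List.mem_append_left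
  apply List.mem_append_left; apply List.mem_append_left
  apply List.mem_append_right
  refine List.mem_flatten.2 ⟨_, List.mem_ofFn.2 ⟨i, rfl⟩, ?_⟩
  simp

lemma mem4a (i : Fin n) :
    (DLConcept.atom (dA i.val), DLConcept.all (rR i.val) (.atom (dA (i.val + 1)))) ∈ Tphi' n m Cl := by
  rw [Tphi']
  apply List.mem_append_left; apply List.mem_append_left; apply List.mem_append_left
  apply List.mem_append_left; apply List.mem_append_left; apply List.mem_append_left
  apply List.mem_append_left
  apply List.mem_append_right
  exact List.mem_ofFn.2 ⟨i, rfl⟩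

lemma mem5p (k i : ℕ) (hk : k < i) (hi : i < n) :
    (DLConcept.atom (xpA k), DLConcept.all (rR i) (.atom (xpA k))) ∈ Tphi' n m Cl := by
  rw [Tphi']
  apply List.mem_append_left; apply List.mem_append_left; apply List.mem_append_left
  apply List.mem_append_left; apply List.mem_append_left
  apply List.mem_append_right
  refine List.mem_flatMap.2 ⟨k, List.mem_range.2 (by omega), ?_⟩
  refine List.mem_flatMap.2 ⟨i, List.mem_range.2 hi, ?_⟩
  rw [if_pos hk]
  simp

lemma mem5m (k i : ℕ) (hk : k < i) (hi : i < n) :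
    (DLConcept.atom (xmA k), DLConcept.all (rR i) (.atom (xmA k))) ∈ Tphi' n m Cl := by
  rw [Tphi']
  apply List.mem_append_left; apply List.mem_append_left; apply List.mem_append_left
  apply List.mem_append_left; apply List.mem_append_left
  apply List.mem_append_right
  refine List.mem_flatMap.2 ⟨k, List.mem_range.2 (by omega), ?_⟩
  refine List.mem_flatMap.2 ⟨i, List.mem_range.2 hi, ?_⟩
  rw [if_pos hk]
  simp

lemma mem6 (j : Fin m) (p : DLConcept × DLConcept)
    (hp : p ∈ [(til (Cl j).1, DLConcept.ex (rP1 j.val) ct),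
         (til (Cl j).2.1, DLConcept.all (rP1 j.val) (til (Cl j).2.1)),
         (DLConcept.ex (rP1 j.val) (til (Cl j).2.1), DLConcept.ex (rP2 j.val) ct),
         (til (Cl j).2.2, DLConcept.all (rP2 j.val) (til (Cl j).2.2)),
         (DLConcept.ex (rP2 j.val) (til (Cl j).2.2), DLConcept.atom (cmA j.val))]) :
    p ∈ Tphi' n m Cl := by
  rw [Tphi']
  apply List.mem_append_left; apply List.mem_append_left; apply List.mem_append_left
  apply List.mem_append_left
  apply List.mem_append_right
  exact List.mem_flatten.2 ⟨_, List.mem_ofFn.2 ⟨j, rfl⟩, hp⟩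

lemma mem7 (j : Fin m) :
    (DLConcept.atom (cmA j.val), DLConcept.atom fA) ∈ Tphi' n m Cl := by
  rw [Tphi']
  apply List.mem_append_left; apply List.mem_append_left; apply List.mem_append_left
  apply List.mem_append_right
  exact List.mem_ofFn.2 ⟨j, rfl⟩

lemma mem8a : (DLConcept.atom fA, DLConcept.ex rF ct) ∈ Tphi' n m Cl := by
  rw [Tphi']
  apply List.mem_append_left; apply List.mem_append_left
  apply List.mem_append_right
  simp

lemma mem8b : (DLConcept.atom fA', DLConcept.all rF cbot) ∈ Tphi' n m Cl := by
  rw [Tphi']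
  apply List.mem_append_left; apply List.mem_append_left
  apply List.mem_append_right
  simp

lemma mem10 :
    (DLConcept.atom (dA 0),
      allChain (List.ofFn fun i : Fin n => rR i.val) (.atom fA')) ∈ Tphi' n m Cl := by
  rw [Tphi']
  apply List.mem_append_right
  simp

end MemLemmas

section Backward

variable (n m : ℕ) (Cl : Fin m → (Fin n × Bool) × (Fin n × Bool) × (Fin n × Bool))

theorem backward {Δ : Type} (I : DLInterp Δ) (hT : satTBox I (Tphi' n m Cl))
    (e : Δ) (he : e ∈ (DLConcept.atom (dA 0)).sem I) (σ : ℕ → Bool) :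
    matrixEval Cl σ := by
  have chain : ∀ i : ℕ, i ≤ n → ∃ y : Δ,
      y ∈ (DLConcept.atom (dA i)).sem I ∧
      y ∈ (allChain ((List.range' i (n - i)).map rR) (DLConcept.atom fA')).sem I ∧
      ∀ k, k < i → y ∈ (DLConcept.atom (if σ k then xpA k else xmA k)).sem I := by
    intro i
    induction i with
    | zero =>
      intro _
      refine ⟨e, he, ?_, fun k hk => absurd hk (by omega)⟩
      have h10 := hT _ (mem10 n m Cl) he
      rw [ofFn_val_map' rR n] at h10
      rw [Nat.sub_zero]
      exact h10
    | succ i ih =>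
      intro hi1
      obtain ⟨y, hyd, hyc, hyk⟩ := ih (by omega)
      have hin : i < n := by omega
      obtain ⟨z, hyz, hz⟩ : ∃ z, (y, z) ∈ I.role (rR i) ∧
          z ∈ (DLConcept.atom (if σ i then xpA i else xmA i)).sem I := by
        by_cases hσ : σ i
        · have h := hT _ (mem3p n m Cl ⟨i, hin⟩) hyd
          rw [mem_sem_ex] at h
          obtain ⟨z, h1, h2⟩ := h
          exact ⟨z, h1, by rw [if_pos hσ]; exact h2⟩
        · have h := hT _ (mem3m n m Cl ⟨i, hin⟩) hyd
          rw [mem_sem_ex] at h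
          obtain ⟨z, h1, h2⟩ := h
          exact ⟨z, h1, by rw [if_neg hσ]; exact h2⟩
      refine ⟨z, ?_, ?_, ?_⟩
      · have h := hT _ (mem4a n m Cl ⟨i, hin⟩) hyd
        rw [mem_sem_all] at h
        exact h z hyz
      · have hn : n - i = (n - (i + 1)) + 1 := by omega
        rw [hn, List.range'_succ, List.map_cons] at hyc
        rw [show allChain (rR i :: (List.range' (i + 1) (n - (i + 1))).map rR)
              (DLConcept.atom fA')
            = DLConcept.all (rR i)
              (allChain ((List.range' (i + 1) (n - (i + 1))).map rR) (DLConcept.atom fA'))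
          from rfl, mem_sem_all] at hyc
        exact hyc z hyz
      · intro k hk
        by_cases hki : k < i
        · have hyk' := hyk k hki
          by_cases hσk : σ k
          · rw [if_pos hσk] at hyk' ⊢
            have h := hT _ (mem5p n m Cl k i hki hin) hyk'
            rw [mem_sem_all] at h
            exact h z hyz
          · rw [if_neg hσk] at hyk' ⊢
            have h := hT _ (mem5m n m Cl k i hki hin) hyk'
            rw [mem_sem_all] at h
            exact h z hyz
        · have hk' : k = i := by omega
          subst hk'
          exact hz
  obtain ⟨y, hyd, hyc, hyk⟩ := chain n le_rfl
  have hyf' : y ∈ (DLConcept.atom fA').sem I := by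
    rw [Nat.sub_self] at hyc
    simpa [allChain] using hyc
  intro j
  by_contra hcon
  simp only [Bool.or_eq_true, not_or, Bool.not_eq_true] at hcon
  obtain ⟨⟨ha, hb⟩, hc⟩ := hcon
  have key : ∀ l : Fin n × Bool, litEval σ l = false → y ∈ (til l).sem I := by
    rintro ⟨v, b⟩ hl
    cases b
    · have hv : σ v.val = true := by simpa [litEval] using hl
      have h := hyk v.val v.isLt
      rw [if_pos hv] at h
      simpa [til] using h
    · have hv : σ v.val = false := by simpa [litEval] using hl
      have h := hyk v.val v.isLt
      rw [if_neg (by simp [hv])] at h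
      simpa [til] using h
  have hy1 := key _ ha
  have hy2 := key _ hb
  have hy3 := key _ hc
  have s1 := hT _ (mem6 n m Cl j (til (Cl j).1, DLConcept.ex (rP1 j.val) ct) (by simp)) hy1
  rw [mem_sem_ex] at s1
  obtain ⟨z1, hz1, -⟩ := s1
  have s2 := hT _ (mem6 n m Cl j (til (Cl j).2.1, DLConcept.all (rP1 j.val) (til (Cl j).2.1)) (by simp)) hy2
  rw [mem_sem_all] at s2
  have hz1' := s2 z1 hz1
  have s3 := hT _ (mem6 n m Cl j (DLConcept.ex (rP1 j.val) (til (Cl j).2.1), DLConcept.ex (rP2 j.val) ct) (by simp))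
    (show y ∈ (DLConcept.ex (rP1 j.val) (til (Cl j).2.1)).sem I from ⟨z1, hz1, hz1'⟩)
  rw [mem_sem_ex] at s3
  obtain ⟨z2, hz2, -⟩ := s3
  have s4 := hT _ (mem6 n m Cl j (til (Cl j).2.2, DLConcept.all (rP2 j.val) (til (Cl j).2.2)) (by simp)) hy3
  rw [mem_sem_all] at s4
  have hz2' := s4 z2 hz2
  have s5 := hT _ (mem6 n m Cl j (DLConcept.ex (rP2 j.val) (til (Cl j).2.2), DLConcept.atom (cmA j.val)) (by simp))
    (show y ∈ (DLConcept.ex (rP2 j.val) (til (Cl j).2.2)).sem I from ⟨z2, hz2, hz2'⟩)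
  have s6 := hT _ (mem7 n m Cl j) s5
  have s7 := hT _ (mem8a n m Cl) s6
  rw [mem_sem_ex] at s7
  obtain ⟨w, hw, -⟩ := s7
  have s8 := hT _ (mem8b n m Cl) hyf'
  rw [mem_sem_all] at s8
  have hbad := s8 w hw
  rw [cbot_sem] at hbad
  exact hbad

end Backward

/-- the 3-CNF formula `φ = C_1 ∧ ⋯ ∧ C_m` over `x_1, …, x_n` is a tautology
iff some interpretation `I` satisfies `T'_φ` with `d_0^I ≠ ∅`. -/
theorem stmt_16 (n m : ℕ)
    (Cl : Fin m → (Fin n × Bool) × (Fin n × Bool) × (Fin n × Bool)) :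
    (∀ σ : ℕ → Bool, matrixEval Cl σ) ↔
      ∃ (Δ : Type) (I : DLInterp Δ), satTBox I (Tphi' n m Cl) ∧
        ((DLConcept.atom (dA 0)).sem I).Nonempty := by
  constructor
  · intro taut
    refine ⟨ΔT n, myI n m Cl, model_sat n m Cl taut, ⟨(⟨0, by omega⟩, fun _ => false), ?_⟩⟩
    rw [mem_sem_atom, myI_atom, myAtom_dA]
    rfl
  · rintro ⟨Δ, I, hT, e, he⟩ σ
    exact backward n m Cl I hT e he σ
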